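/- Let R = Z[e_1, e_2, e_3, e_4] / J, where J is generated by the relations e_{2k} + sum_{i=1}^{2k-1} (-1)^i e_i e_{2k-i} = 0 for k = 1, 2, 3, 4 (with e_i = 0 for i >= 5). Then the 16 square-free monomials e_{i_1} ... e_{i_r} with 1 <= i_1 < ... < i_r <= 4 (including 1) form a Z-basis of R. -/

import Mathlib

open MvPolynomial

/-- The ideal of relations in the cohomology ring of `OGr₊(5,10)`: for `k = 1,2,3,4`,
the relation `e_{2k} + ∑_{i=1}^{2k-1} (-1)^i eᵢ e_{2k-i} = 0` (with `eᵢ = 0` for `i ≥ 5`),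
i.e. generated by `e₂ - e₁²`, `e₄ - e₁e₃ + e₂² - e₃e₁`, `e₂e₄ - e₃² + e₄e₂`, `e₄²`
in `ℤ[e₁, e₂, e₃, e₄]` (with `eᵢ = X (i-1)`). -/
noncomputable def ogrIdeal : Ideal (MvPolynomial (Fin 4) ℤ) :=
  Ideal.span
    {X 1 - X 0 * X 0,
     X 3 - X 0 * X 2 + X 1 * X 1 - X 2 * X 0,
     X 1 * X 3 - X 2 * X 2 + X 3 * X 1,
     X 3 * X 3}

private def Mo1 : Matrix (Fin 16) (Fin 16) ℤ :=
  Matrix.of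
  ![![0, 0, 0, 0, 0, 0, 0, 0, 0, 0, 0, 0, 0, 0, 0, 0],
   ![1, 0, 0, 0, 0, 0, 0, 0, 0, 0, 0, 0, 0, 0, 0, 0],
   ![0, 1, 0, 0, 0, 0, 0, 0, 0, 0, 0, 0, 0, 0, 0, 0],
   ![0, 0, 0, 0, 0, 0, 0, 0, 0, 0, 0, 0, 0, 0, 0, 0],
   ![0, 0, 0, 0, 0, -1, 0, 0, 0, 0, 0, 0, 0, 0, 0, 0],
   ![0, 0, 1, 0, 0, 0, 0, 0, 0, 0, 0, 0, 0, 0, 0, 0],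
   ![0, 0, 0, 1, 0, 2, 0, 0, 0, 0, 0, 0, 0, 0, 0, 0],
   ![0, 0, 0, 0, 1, 0, 0, 0, 0, 0, 0, 0, 0, 0, 0, 0],
   ![0, 0, 0, 0, 0, 0, 1, 0, 0, 0, 0, 0, 0, 0, 0, 0],
   ![0, 0, 0, 0, 0, 0, 0, 1, 0, 0, 0, 0, 0, 0, 0, 0],
   ![0, 0, 0, 0, 0, 0, 0, 0, 0, 0, 0, -1, 0, 0, 0, 0],
   ![0, 0, 0, 0, 0, 0, 0, 0, 1, 0, 0, 0, 0, 0, 0, 0],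
   ![0, 0, 0, 0, 0, 0, 0, 0, 0, 1, 0, 4, 0, 0, 0, 0],
   ![0, 0, 0, 0, 0, 0, 0, 0, 0, 0, 1, 0, 2, 0, 0, 0],
   ![0, 0, 0, 0, 0, 0, 0, 0, 0, 0, 0, 0, 0, 1, 0, 0],
   ![0, 0, 0, 0, 0, 0, 0, 0, 0, 0, 0, 0, 0, 0, 1, 0]]

private def Mo2 : Matrix (Fin 16) (Fin 16) ℤ :=
  Matrix.of
  ![![0, 0, 0, 0, 0, 0, 0, 0, 0, 0, 0, 0, 0, 0, 0, 0],
   ![0, 0, 0, 0, 0, 0, 0, 0, 0, 0, 0, 0, 0, 0, 0, 0],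
   ![1, 0, 0, 0, 0, 0, 0, 0, 0, 0, 0, 0, 0, 0, 0, 0],
   ![0, 0, 0, 0, 0, 0, 0, 0, 0, 0, 0, 0, 0, 0, 0, 0],
   ![0, 0, -1, 0, 0, 0, 0, 0, 0, 0, 0, 0, 0, 0, 0, 0],
   ![0, 1, 0, 0, 0, 0, 0, 0, 0, 0, 0, 0, 0, 0, 0, 0],
   ![0, 0, 2, 0, 0, 0, 0, 0, 0, 0, 0, 0, 0, 0, 0, 0],
   ![0, 0, 0, 0, 0, -1, 0, 0, 0, 0, 0, 0, 0, 0, 0, 0],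
   ![0, 0, 0, 1, 0, 2, 0, 0, 0, 0, 0, 0, 0, 0, 0, 0],
   ![0, 0, 0, 0, 1, 0, 0, 0, 0, 0, 0, 0, 0, 0, 0, 0],
   ![0, 0, 0, 0, 0, 0, 0, 0, -1, 0, 0, 0, 0, 0, 0, 0],
   ![0, 0, 0, 0, 0, 0, 1, 0, 0, 0, 0, 0, 0, 0, 0, 0],
   ![0, 0, 0, 0, 0, 0, 0, 1, 4, 0, 0, 0, 0, 0, 0, 0],
   ![0, 0, 0, 0, 0, 0, 0, 0, 0, 2, 0, 7, 0, 0, 0, 0],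
   ![0, 0, 0, 0, 0, 0, 0, 0, 0, 0, 1, 0, 2, 0, 0, 0],
   ![0, 0, 0, 0, 0, 0, 0, 0, 0, 0, 0, 0, 0, 1, 0, 0]]

private def Mo3 : Matrix (Fin 16) (Fin 16) ℤ :=
  Matrix.of
  ![![0, 0, 0, 0, 0, 0, 0, 0, 0, 0, 0, 0, 0, 0, 0, 0],
   ![0, 0, 0, 0, 0, 0, 0, 0, 0, 0, 0, 0, 0, 0, 0, 0],
   ![0, 0, 0, 0, 0, 0, 0, 0, 0, 0, 0, 0, 0, 0, 0, 0],
   ![1, 0, 0, 0, 0, 0, 0, 0, 0, 0, 0, 0, 0, 0, 0, 0],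
   ![0, 0, 0, 0, 0, 0, 0, 0, 0, 0, 0, 0, 0, 0, 0, 0],
   ![0, 0, 0, 0, 0, 0, 0, 0, 0, 0, 0, 0, 0, 0, 0, 0],
   ![0, 1, 0, 0, 0, 0, 0, 0, 0, 0, 0, 0, 0, 0, 0, 0],
   ![0, 0, 0, 0, 0, 0, 0, 0, 0, 0, 0, 0, 0, 0, 0, 0],
   ![0, 0, 1, 0, 0, 0, 0, 0, 0, 0, 0, 0, 0, 0, 0, 0],
   ![0, 0, 0, 2, 0, 0, 0, 0, 0, 0, 0, 0, 0, 0, 0, 0],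
   ![0, 0, 0, 0, 1, 0, 0, 0, 0, 0, 0, 0, 0, 0, 0, 0],
   ![0, 0, 0, 0, 0, 1, 0, 0, 0, 0, 0, 0, 0, 0, 0, 0],
   ![0, 0, 0, 0, 0, 0, 2, 0, 0, 0, 0, 0, 0, 0, 0, 0],
   ![0, 0, 0, 0, 0, 0, 0, 1, 4, 0, 0, 0, 0, 0, 0, 0],
   ![0, 0, 0, 0, 0, 0, 0, 0, 0, 1, 0, 4, 0, 0, 0, 0],
   ![0, 0, 0, 0, 0, 0, 0, 0, 0, 0, 0, 0, 1, 0, 0, 0]]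

private def Mo4 : Matrix (Fin 16) (Fin 16) ℤ :=
  Matrix.of
  ![![0, 0, 0, 0, 0, 0, 0, 0, 0, 0, 0, 0, 0, 0, 0, 0],
   ![0, 0, 0, 0, 0, 0, 0, 0, 0, 0, 0, 0, 0, 0, 0, 0],
   ![0, 0, 0, 0, 0, 0, 0, 0, 0, 0, 0, 0, 0, 0, 0, 0],
   ![0, 0, 0, 0, 0, 0, 0, 0, 0, 0, 0, 0, 0, 0, 0, 0],
   ![1, 0, 0, 0, 0, 0, 0, 0, 0, 0, 0, 0, 0, 0, 0, 0],
   ![0, 0, 0, 0, 0, 0, 0, 0, 0, 0, 0, 0, 0, 0, 0, 0],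
   ![0, 0, 0, 0, 0, 0, 0, 0, 0, 0, 0, 0, 0, 0, 0, 0],
   ![0, 1, 0, 0, 0, 0, 0, 0, 0, 0, 0, 0, 0, 0, 0, 0],
   ![0, 0, 0, 0, 0, 0, 0, 0, 0, 0, 0, 0, 0, 0, 0, 0],
   ![0, 0, 1, 0, 0, 0, 0, 0, 0, 0, 0, 0, 0, 0, 0, 0],
   ![0, 0, 0, 1, 0, 0, 0, 0, 0, 0, 0, 0, 0, 0, 0, 0],
   ![0, 0, 0, 0, 0, 0, 0, 0, 0, 0, 0, 0, 0, 0, 0, 0],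
   ![0, 0, 0, 0, 0, 1, 0, 0, 0, 0, 0, 0, 0, 0, 0, 0],
   ![0, 0, 0, 0, 0, 0, 1, 0, 0, 0, 0, 0, 0, 0, 0, 0],
   ![0, 0, 0, 0, 0, 0, 0, 0, 1, 0, 0, 0, 0, 0, 0, 0],
   ![0, 0, 0, 0, 0, 0, 0, 0, 0, 0, 0, 1, 0, 0, 0, 0]]


private lemma cm12e : Mo1 * Mo2 = Mo2 * Mo1 := by decide
private lemma cm13e : Mo1 * Mo3 = Mo3 * Mo1 := by decide
private lemma cm14e : Mo1 * Mo4 = Mo4 * Mo1 := by decide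
private lemma cm23e : Mo2 * Mo3 = Mo3 * Mo2 := by decide
private lemma cm24e : Mo2 * Mo4 = Mo4 * Mo2 := by decide
private lemma cm34e : Mo3 * Mo4 = Mo4 * Mo3 := by decide
private lemma cm12 : Commute Mo1 Mo2 := cm12e
private lemma cm13 : Commute Mo1 Mo3 := cm13e
private lemma cm14 : Commute Mo1 Mo4 := cm14e
private lemma cm23 : Commute Mo2 Mo3 := cm23e
private lemma cm24 : Commute Mo2 Mo4 := cm24e
private lemma cm34 : Commute Mo3 Mo4 := cm34e

private lemma idI1 : Mo2 = Mo1 * Mo1 := by decide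
set_option maxHeartbeats 1600000 in
private lemma idI2 : Mo4 + Mo2 * Mo2 = Mo3 * Mo1 + Mo1 * Mo3 := by decide
set_option maxHeartbeats 1600000 in
private lemma idI3 : Mo4 * Mo2 + Mo2 * Mo4 = Mo3 * Mo3 := by decide
private lemma idZ4 : Mo4 * Mo4 = 0 := by decide

private lemma idZ1 : Mo2 - Mo1 * Mo1 = 0 := sub_eq_zero.mpr idI1
private lemma idZ2 : Mo4 - Mo3 * Mo1 + Mo2 * Mo2 - Mo1 * Mo3 = 0 := by
  rw [show Mo4 - Mo3 * Mo1 + Mo2 * Mo2 - Mo1 * Mo3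
      = (Mo4 + Mo2 * Mo2) - (Mo3 * Mo1 + Mo1 * Mo3) from by abel, idI2, sub_self]
private lemma idZ3 : Mo4 * Mo2 - Mo3 * Mo3 + Mo2 * Mo4 = 0 := by
  rw [show Mo4 * Mo2 - Mo3 * Mo3 + Mo2 * Mo4
      = (Mo4 * Mo2 + Mo2 * Mo4) - Mo3 * Mo3 from by abel, idI3, sub_self]

private noncomputable def ogrF (d : Fin 4 →₀ ℕ) : Fin 16 → ℤ :=
  (Mo1 ^ d 0 * Mo2 ^ d 1 * Mo3 ^ d 2 * Mo4 ^ d 3).mulVec (Pi.single 0 1)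

private lemma fA0 (d : Fin 4 →₀ ℕ) :
    ogrF (d + Finsupp.single 0 1) = (Mo1).mulVec (ogrF d) := by
  unfold ogrF
  rw [Matrix.mulVec_mulVec]
  congr 1
  have h0 : ((d + Finsupp.single (0 : Fin 4) 1 : Fin 4 →₀ ℕ)) 0 = d 0 + 1 := by rw [Finsupp.add_apply, Finsupp.single_eq_same]
  have h1 : ((d + Finsupp.single (0 : Fin 4) 1 : Fin 4 →₀ ℕ)) 1 = d 1 := by rw [Finsupp.add_apply, Finsupp.single_eq_of_ne' (show (0 : Fin 4) ≠ 1 by decide), add_zero]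
  have h2 : ((d + Finsupp.single (0 : Fin 4) 1 : Fin 4 →₀ ℕ)) 2 = d 2 := by rw [Finsupp.add_apply, Finsupp.single_eq_of_ne' (show (0 : Fin 4) ≠ 2 by decide), add_zero]
  have h3 : ((d + Finsupp.single (0 : Fin 4) 1 : Fin 4 →₀ ℕ)) 3 = d 3 := by rw [Finsupp.add_apply, Finsupp.single_eq_of_ne' (show (0 : Fin 4) ≠ 3 by decide), add_zero]
  rw [h0, h1, h2, h3]
  rw [pow_succ']
  simp only [← mul_assoc]

private lemma fA1 (d : Fin 4 →₀ ℕ) :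
    ogrF (d + Finsupp.single 1 1) = (Mo2).mulVec (ogrF d) := by
  unfold ogrF
  rw [Matrix.mulVec_mulVec]
  congr 1
  have h0 : ((d + Finsupp.single (1 : Fin 4) 1 : Fin 4 →₀ ℕ)) 0 = d 0 := by rw [Finsupp.add_apply, Finsupp.single_eq_of_ne' (show (1 : Fin 4) ≠ 0 by decide), add_zero]
  have h1 : ((d + Finsupp.single (1 : Fin 4) 1 : Fin 4 →₀ ℕ)) 1 = d 1 + 1 := by rw [Finsupp.add_apply, Finsupp.single_eq_same]
  have h2 : ((d + Finsupp.single (1 : Fin 4) 1 : Fin 4 →₀ ℕ)) 2 = d 2 := by rw [Finsupp.add_apply, Finsupp.single_eq_of_ne' (show (1 : Fin 4) ≠ 2 by decide), add_zero]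
  have h3 : ((d + Finsupp.single (1 : Fin 4) 1 : Fin 4 →₀ ℕ)) 3 = d 3 := by rw [Finsupp.add_apply, Finsupp.single_eq_of_ne' (show (1 : Fin 4) ≠ 3 by decide), add_zero]
  rw [h0, h1, h2, h3]
  rw [pow_succ']
  simp only [← mul_assoc]
  rw [(cm12.pow_left (d 0)).eq]

private lemma fA2 (d : Fin 4 →₀ ℕ) :
    ogrF (d + Finsupp.single 2 1) = (Mo3).mulVec (ogrF d) := by
  unfold ogrF
  rw [Matrix.mulVec_mulVec]
  congr 1
  have h0 : ((d + Finsupp.single (2 : Fin 4) 1 : Fin 4 →₀ ℕ)) 0 = d 0 := by rw [Finsupp.add_apply, Finsupp.single_eq_of_ne' (show (2 : Fin 4) ≠ 0 by decide), add_zero]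
  have h1 : ((d + Finsupp.single (2 : Fin 4) 1 : Fin 4 →₀ ℕ)) 1 = d 1 := by rw [Finsupp.add_apply, Finsupp.single_eq_of_ne' (show (2 : Fin 4) ≠ 1 by decide), add_zero]
  have h2 : ((d + Finsupp.single (2 : Fin 4) 1 : Fin 4 →₀ ℕ)) 2 = d 2 + 1 := by rw [Finsupp.add_apply, Finsupp.single_eq_same]
  have h3 : ((d + Finsupp.single (2 : Fin 4) 1 : Fin 4 →₀ ℕ)) 3 = d 3 := by rw [Finsupp.add_apply, Finsupp.single_eq_of_ne' (show (2 : Fin 4) ≠ 3 by decide), add_zero]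
  rw [h0, h1, h2, h3]
  rw [pow_succ']
  simp only [← mul_assoc]
  rw [show Mo1 ^ d 0 * Mo2 ^ d 1 * Mo3 = Mo3 * Mo1 ^ d 0 * Mo2 ^ d 1 from by
    have h : Mo1 ^ d 0 * Mo2 ^ d 1 * Mo3 = Mo3 * (Mo1 ^ d 0 * Mo2 ^ d 1) :=
      (Commute.mul_left (cm13.pow_left (d 0)) (cm23.pow_left (d 1))).eq
    simp only [mul_assoc] at h ⊢
    exact h]

private lemma fA3 (d : Fin 4 →₀ ℕ) :
    ogrF (d + Finsupp.single 3 1) = (Mo4).mulVec (ogrF d) := by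
  unfold ogrF
  rw [Matrix.mulVec_mulVec]
  congr 1
  have h0 : ((d + Finsupp.single (3 : Fin 4) 1 : Fin 4 →₀ ℕ)) 0 = d 0 := by rw [Finsupp.add_apply, Finsupp.single_eq_of_ne' (show (3 : Fin 4) ≠ 0 by decide), add_zero]
  have h1 : ((d + Finsupp.single (3 : Fin 4) 1 : Fin 4 →₀ ℕ)) 1 = d 1 := by rw [Finsupp.add_apply, Finsupp.single_eq_of_ne' (show (3 : Fin 4) ≠ 1 by decide), add_zero]
  have h2 : ((d + Finsupp.single (3 : Fin 4) 1 : Fin 4 →₀ ℕ)) 2 = d 2 := by rw [Finsupp.add_apply, Finsupp.single_eq_of_ne' (show (3 : Fin 4) ≠ 2 by decide), add_zero]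
  have h3 : ((d + Finsupp.single (3 : Fin 4) 1 : Fin 4 →₀ ℕ)) 3 = d 3 + 1 := by rw [Finsupp.add_apply, Finsupp.single_eq_same]
  rw [h0, h1, h2, h3]
  rw [pow_succ']
  simp only [← mul_assoc]
  rw [show Mo1 ^ d 0 * Mo2 ^ d 1 * Mo3 ^ d 2 * Mo4 = Mo4 * Mo1 ^ d 0 * Mo2 ^ d 1 * Mo3 ^ d 2 from by
    have h : Mo1 ^ d 0 * Mo2 ^ d 1 * Mo3 ^ d 2 * Mo4 = Mo4 * (Mo1 ^ d 0 * Mo2 ^ d 1 * Mo3 ^ d 2) :=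
      (Commute.mul_left (Commute.mul_left (cm14.pow_left (d 0)) (cm24.pow_left (d 1))) (cm34.pow_left (d 2))).eq
    simp only [mul_assoc] at h ⊢
    exact h]


private lemma Xm (i : Fin 4) : (X i : MvPolynomial (Fin 4) ℤ) = monomial (Finsupp.single i 1) 1 := rfl

private noncomputable def ogrL : MvPolynomial (Fin 4) ℤ →ₗ[ℤ] (Fin 16 → ℤ) :=
  (basisMonomials (Fin 4) ℤ).constr ℤ ogrF

private lemma Lmono (d : Fin 4 →₀ ℕ) : ogrL (monomial d 1) = ogrF d := by
  have h : (basisMonomials (Fin 4) ℤ) d = monomial d 1 := congrFun (coe_basisMonomials (Fin 4) ℤ) d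
  rw [← h]
  exact (basisMonomials (Fin 4) ℤ).constr_basis ℤ ogrF d
private lemma key1 (q : MvPolynomial (Fin 4) ℤ) : ogrL (q * (X 1 - X 0 * X 0 : MvPolynomial (Fin 4) ℤ)) = 0 := by
  have hmap : ogrL ∘ₗ LinearMap.mulRight ℤ (X 1 - X 0 * X 0 : MvPolynomial (Fin 4) ℤ) = 0 := by
    refine Module.Basis.ext (basisMonomials (Fin 4) ℤ) fun d => ?_
    simp only [LinearMap.comp_apply, LinearMap.mulRight_apply, LinearMap.zero_apply,
               coe_basisMonomials]
    simp only [mul_sub, mul_add, Xm, monomial_mul, one_mul, mul_one, ← add_assoc,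
               map_sub, map_add, Lmono, fA0, fA1, fA2, fA3, Matrix.mulVec_mulVec]
    rw [← Matrix.sub_mulVec, idZ1, Matrix.zero_mulVec]
  have h := LinearMap.ext_iff.mp hmap q
  rw [LinearMap.comp_apply, LinearMap.mulRight_apply, LinearMap.zero_apply] at h
  exact h

private lemma key2 (q : MvPolynomial (Fin 4) ℤ) : ogrL (q * (X 3 - X 0 * X 2 + X 1 * X 1 - X 2 * X 0 : MvPolynomial (Fin 4) ℤ)) = 0 := by
  have hmap : ogrL ∘ₗ LinearMap.mulRight ℤ (X 3 - X 0 * X 2 + X 1 * X 1 - X 2 * X 0 : MvPolynomial (Fin 4) ℤ) = 0 := by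
    refine Module.Basis.ext (basisMonomials (Fin 4) ℤ) fun d => ?_
    simp only [LinearMap.comp_apply, LinearMap.mulRight_apply, LinearMap.zero_apply,
               coe_basisMonomials]
    simp only [mul_sub, mul_add, Xm, monomial_mul, one_mul, mul_one, ← add_assoc,
               map_sub, map_add, Lmono, fA0, fA1, fA2, fA3, Matrix.mulVec_mulVec]
    rw [← Matrix.sub_mulVec, ← Matrix.add_mulVec, ← Matrix.sub_mulVec, idZ2, Matrix.zero_mulVec]
  have h := LinearMap.ext_iff.mp hmap q
  rw [LinearMap.comp_apply, LinearMap.mulRight_apply, LinearMap.zero_apply] at h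
  exact h

private lemma key3 (q : MvPolynomial (Fin 4) ℤ) : ogrL (q * (X 1 * X 3 - X 2 * X 2 + X 3 * X 1 : MvPolynomial (Fin 4) ℤ)) = 0 := by
  have hmap : ogrL ∘ₗ LinearMap.mulRight ℤ (X 1 * X 3 - X 2 * X 2 + X 3 * X 1 : MvPolynomial (Fin 4) ℤ) = 0 := by
    refine Module.Basis.ext (basisMonomials (Fin 4) ℤ) fun d => ?_
    simp only [LinearMap.comp_apply, LinearMap.mulRight_apply, LinearMap.zero_apply,
               coe_basisMonomials]
    simp only [mul_sub, mul_add, Xm, monomial_mul, one_mul, mul_one, ← add_assoc,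
               map_sub, map_add, Lmono, fA0, fA1, fA2, fA3, Matrix.mulVec_mulVec]
    rw [← Matrix.sub_mulVec, ← Matrix.add_mulVec, idZ3, Matrix.zero_mulVec]
  have h := LinearMap.ext_iff.mp hmap q
  rw [LinearMap.comp_apply, LinearMap.mulRight_apply, LinearMap.zero_apply] at h
  exact h

private lemma key4 (q : MvPolynomial (Fin 4) ℤ) : ogrL (q * (X 3 * X 3 : MvPolynomial (Fin 4) ℤ)) = 0 := by
  have hmap : ogrL ∘ₗ LinearMap.mulRight ℤ (X 3 * X 3 : MvPolynomial (Fin 4) ℤ) = 0 := by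
    refine Module.Basis.ext (basisMonomials (Fin 4) ℤ) fun d => ?_
    simp only [LinearMap.comp_apply, LinearMap.mulRight_apply, LinearMap.zero_apply,
               coe_basisMonomials]
    simp only [mul_sub, mul_add, Xm, monomial_mul, one_mul, mul_one, ← add_assoc,
               map_sub, map_add, Lmono, fA0, fA1, fA2, fA3, Matrix.mulVec_mulVec]
    rw [idZ4, Matrix.zero_mulVec]
  have h := LinearMap.ext_iff.mp hmap q
  rw [LinearMap.comp_apply, LinearMap.mulRight_apply, LinearMap.zero_apply] at h
  exact h

private lemma killIdeal (p : MvPolynomial (Fin 4) ℤ) (hp : p ∈ ogrIdeal) : ogrL p = 0 := by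
  have hp' : p ∈ Submodule.span (MvPolynomial (Fin 4) ℤ)
      ({X 1 - X 0 * X 0, X 3 - X 0 * X 2 + X 1 * X 1 - X 2 * X 0,
        X 1 * X 3 - X 2 * X 2 + X 3 * X 1, X 3 * X 3} : Set (MvPolynomial (Fin 4) ℤ)) := hp
  have key : ∀ q, ogrL (q * p) = 0 := by
    refine Submodule.span_induction (p := fun x _ => ∀ q, ogrL (q * x) = 0) ?_ ?_ ?_ ?_ hp'
    · intro x hx
      simp only [Set.mem_insert_iff, Set.mem_singleton_iff] at hx
      rcases hx with rfl | rfl | rfl | rfl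
      · exact key1
      · exact key2
      · exact key3
      · exact key4
    · intro q; rw [mul_zero, map_zero]
    · intro x y hx hy h1 h2 q; rw [mul_add, map_add, h1, h2, add_zero]
    · intro a x hx h1 q
      rw [smul_eq_mul, ← mul_assoc]
      exact h1 (q * a)
  have h := key 1
  rwa [one_mul] at h

private lemma LX0 (p : MvPolynomial (Fin 4) ℤ) : ogrL (X 0 * p) = (Mo1).mulVec (ogrL p) := by
  have hmap : ogrL ∘ₗ LinearMap.mulLeft ℤ (X 0 : MvPolynomial (Fin 4) ℤ)
      = (Mo1).mulVecLin ∘ₗ ogrL := by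
    refine Module.Basis.ext (basisMonomials (Fin 4) ℤ) fun d => ?_
    simp only [LinearMap.comp_apply, LinearMap.mulLeft_apply, coe_basisMonomials,
               Xm, monomial_mul, one_mul, Lmono, Matrix.mulVecLin_apply]
    rw [add_comm (Finsupp.single (0 : Fin 4) 1) d]
    exact fA0 d
  have h := LinearMap.ext_iff.mp hmap p
  rw [LinearMap.comp_apply, LinearMap.mulLeft_apply, LinearMap.comp_apply,
      Matrix.mulVecLin_apply] at h
  exact h

private lemma LX1 (p : MvPolynomial (Fin 4) ℤ) : ogrL (X 1 * p) = (Mo2).mulVec (ogrL p) := by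
  have hmap : ogrL ∘ₗ LinearMap.mulLeft ℤ (X 1 : MvPolynomial (Fin 4) ℤ)
      = (Mo2).mulVecLin ∘ₗ ogrL := by
    refine Module.Basis.ext (basisMonomials (Fin 4) ℤ) fun d => ?_
    simp only [LinearMap.comp_apply, LinearMap.mulLeft_apply, coe_basisMonomials,
               Xm, monomial_mul, one_mul, Lmono, Matrix.mulVecLin_apply]
    rw [add_comm (Finsupp.single (1 : Fin 4) 1) d]
    exact fA1 d
  have h := LinearMap.ext_iff.mp hmap p
  rw [LinearMap.comp_apply, LinearMap.mulLeft_apply, LinearMap.comp_apply,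
      Matrix.mulVecLin_apply] at h
  exact h

private lemma LX2 (p : MvPolynomial (Fin 4) ℤ) : ogrL (X 2 * p) = (Mo3).mulVec (ogrL p) := by
  have hmap : ogrL ∘ₗ LinearMap.mulLeft ℤ (X 2 : MvPolynomial (Fin 4) ℤ)
      = (Mo3).mulVecLin ∘ₗ ogrL := by
    refine Module.Basis.ext (basisMonomials (Fin 4) ℤ) fun d => ?_
    simp only [LinearMap.comp_apply, LinearMap.mulLeft_apply, coe_basisMonomials,
               Xm, monomial_mul, one_mul, Lmono, Matrix.mulVecLin_apply]
    rw [add_comm (Finsupp.single (2 : Fin 4) 1) d]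
    exact fA2 d
  have h := LinearMap.ext_iff.mp hmap p
  rw [LinearMap.comp_apply, LinearMap.mulLeft_apply, LinearMap.comp_apply,
      Matrix.mulVecLin_apply] at h
  exact h

private lemma LX3 (p : MvPolynomial (Fin 4) ℤ) : ogrL (X 3 * p) = (Mo4).mulVec (ogrL p) := by
  have hmap : ogrL ∘ₗ LinearMap.mulLeft ℤ (X 3 : MvPolynomial (Fin 4) ℤ)
      = (Mo4).mulVecLin ∘ₗ ogrL := by
    refine Module.Basis.ext (basisMonomials (Fin 4) ℤ) fun d => ?_
    simp only [LinearMap.comp_apply, LinearMap.mulLeft_apply, coe_basisMonomials,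
               Xm, monomial_mul, one_mul, Lmono, Matrix.mulVecLin_apply]
    rw [add_comm (Finsupp.single (3 : Fin 4) 1) d]
    exact fA3 d
  have h := LinearMap.ext_iff.mp hmap p
  rw [LinearMap.comp_apply, LinearMap.mulLeft_apply, LinearMap.comp_apply,
      Matrix.mulVecLin_apply] at h
  exact h

private lemma lm0 : ogrL 1 = Pi.single 0 1 := by
  have h1 : (1 : MvPolynomial (Fin 4) ℤ) = monomial 0 1 := by
    rw [monomial_zero', C_1]
  rw [h1, Lmono]
  decide

private lemma lm1 : ogrL (X 0) = Pi.single 1 1 := by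
  rw [show (X 0 : MvPolynomial (Fin 4) ℤ) = X 0 * (1) from by ring, LX0, lm0]
  decide

private lemma lm2 : ogrL (X 1) = Pi.single 2 1 := by
  rw [show (X 1 : MvPolynomial (Fin 4) ℤ) = X 1 * (1) from by ring, LX1, lm0]
  decide

private lemma lm3 : ogrL (X 2) = Pi.single 3 1 := by
  rw [show (X 2 : MvPolynomial (Fin 4) ℤ) = X 2 * (1) from by ring, LX2, lm0]
  decide

private lemma lm4 : ogrL (X 3) = Pi.single 4 1 := by
  rw [show (X 3 : MvPolynomial (Fin 4) ℤ) = X 3 * (1) from by ring, LX3, lm0]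
  decide

private lemma lm5 : ogrL (X 0 * X 1) = Pi.single 5 1 := by
  rw [show (X 0 * X 1 : MvPolynomial (Fin 4) ℤ) = X 0 * (X 1 * (1)) from by ring, LX0, LX1, lm0]
  decide

private lemma lm6 : ogrL (X 0 * X 2) = Pi.single 6 1 := by
  rw [show (X 0 * X 2 : MvPolynomial (Fin 4) ℤ) = X 0 * (X 2 * (1)) from by ring, LX0, LX2, lm0]
  decide

private lemma lm7 : ogrL (X 0 * X 3) = Pi.single 7 1 := by
  rw [show (X 0 * X 3 : MvPolynomial (Fin 4) ℤ) = X 0 * (X 3 * (1)) from by ring, LX0, LX3, lm0]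
  decide

private lemma lm8 : ogrL (X 1 * X 2) = Pi.single 8 1 := by
  rw [show (X 1 * X 2 : MvPolynomial (Fin 4) ℤ) = X 1 * (X 2 * (1)) from by ring, LX1, LX2, lm0]
  decide

private lemma lm9 : ogrL (X 1 * X 3) = Pi.single 9 1 := by
  rw [show (X 1 * X 3 : MvPolynomial (Fin 4) ℤ) = X 1 * (X 3 * (1)) from by ring, LX1, LX3, lm0]
  decide

private lemma lm10 : ogrL (X 2 * X 3) = Pi.single 10 1 := by
  rw [show (X 2 * X 3 : MvPolynomial (Fin 4) ℤ) = X 2 * (X 3 * (1)) from by ring, LX2, LX3, lm0]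
  decide

private lemma lm11 : ogrL (X 0 * X 1 * X 2) = Pi.single 11 1 := by
  rw [show (X 0 * X 1 * X 2 : MvPolynomial (Fin 4) ℤ) = X 0 * (X 1 * (X 2 * (1))) from by ring, LX0, LX1, LX2, lm0]
  decide

private lemma lm12 : ogrL (X 0 * X 1 * X 3) = Pi.single 12 1 := by
  rw [show (X 0 * X 1 * X 3 : MvPolynomial (Fin 4) ℤ) = X 0 * (X 1 * (X 3 * (1))) from by ring, LX0, LX1, LX3, lm0]
  decide

private lemma lm13 : ogrL (X 0 * X 2 * X 3) = Pi.single 13 1 := by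
  rw [show (X 0 * X 2 * X 3 : MvPolynomial (Fin 4) ℤ) = X 0 * (X 2 * (X 3 * (1))) from by ring, LX0, LX2, LX3, lm0]
  decide

private lemma lm14 : ogrL (X 1 * X 2 * X 3) = Pi.single 14 1 := by
  rw [show (X 1 * X 2 * X 3 : MvPolynomial (Fin 4) ℤ) = X 1 * (X 2 * (X 3 * (1))) from by ring, LX1, LX2, LX3, lm0]
  decide

private lemma lm15 : ogrL (X 0 * X 1 * X 2 * X 3) = Pi.single 15 1 := by
  rw [show (X 0 * X 1 * X 2 * X 3 : MvPolynomial (Fin 4) ℤ) = X 0 * (X 1 * (X 2 * (X 3 * (1)))) from by ring, LX0, LX1, LX2, LX3, lm0]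
  decide

private noncomputable def mons : Fin 16 → MvPolynomial (Fin 4) ℤ :=
  ![1, X 0, X 1, X 2, X 3,
    X 0 * X 1, X 0 * X 2, X 0 * X 3, X 1 * X 2, X 1 * X 3, X 2 * X 3,
    X 0 * X 1 * X 2, X 0 * X 1 * X 3, X 0 * X 2 * X 3, X 1 * X 2 * X 3,
    X 0 * X 1 * X 2 * X 3]

private noncomputable def mq : Fin 16 → (MvPolynomial (Fin 4) ℤ ⧸ ogrIdeal) :=
  fun k => Ideal.Quotient.mk ogrIdeal (mons k)

private lemma hL : ∀ k : Fin 16, ogrL (mons k) = Pi.single k 1 := by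
  intro k; fin_cases k
  exacts [lm0, lm1, lm2, lm3, lm4, lm5, lm6, lm7, lm8, lm9, lm10, lm11, lm12, lm13, lm14, lm15]

private lemma ogr_li : LinearIndependent ℤ mq := by
  rw [Fintype.linearIndependent_iff]
  intro g hg
  have hmem : (∑ k, g k • mons k) ∈ ogrIdeal := by
    have h2 : Ideal.Quotient.mk ogrIdeal (∑ k, g k • mons k) = 0 := by
      rw [map_sum]
      simp only [map_zsmul]
      exact hg
    exact (Ideal.Quotient.eq_zero_iff_mem).mp h2
  have h0 := killIdeal _ hmem
  rw [map_sum] at h0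
  simp only [map_smul, hL] at h0
  intro i
  have h3 := congrFun h0 i
  simpa [Finset.sum_apply, Pi.single_apply] using h3
private noncomputable def qA : MvPolynomial (Fin 4) ℤ ⧸ ogrIdeal := Ideal.Quotient.mk ogrIdeal (X 0)
private noncomputable def qB : MvPolynomial (Fin 4) ℤ ⧸ ogrIdeal := Ideal.Quotient.mk ogrIdeal (X 1)
private noncomputable def qC : MvPolynomial (Fin 4) ℤ ⧸ ogrIdeal := Ideal.Quotient.mk ogrIdeal (X 2)
private noncomputable def qD : MvPolynomial (Fin 4) ℤ ⧸ ogrIdeal := Ideal.Quotient.mk ogrIdeal (X 3)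

private noncomputable def Wsub : Submodule ℤ (MvPolynomial (Fin 4) ℤ ⧸ ogrIdeal) :=
  Submodule.span ℤ (Set.range mq)

private lemma relE1 : qB = qA * qA := by
  have hm : (X 1 - X 0 * X 0 : MvPolynomial (Fin 4) ℤ) ∈ ogrIdeal :=
    Ideal.subset_span (Set.mem_insert _ _)
  have h := Ideal.Quotient.eq_zero_iff_mem.mpr hm
  rw [map_sub, map_mul, sub_eq_zero] at h
  exact h

private lemma relE2 : qD - qA * qC + qB * qB - qC * qA = 0 := by
  have hm : (X 3 - X 0 * X 2 + X 1 * X 1 - X 2 * X 0 : MvPolynomial (Fin 4) ℤ) ∈ ogrIdeal :=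
    Ideal.subset_span (Set.mem_insert_of_mem _ (Set.mem_insert _ _))
  have h := Ideal.Quotient.eq_zero_iff_mem.mpr hm
  simp only [map_sub, map_add, map_mul] at h
  exact h

private lemma relE3 : qB * qD - qC * qC + qD * qB = 0 := by
  have hm : (X 1 * X 3 - X 2 * X 2 + X 3 * X 1 : MvPolynomial (Fin 4) ℤ) ∈ ogrIdeal :=
    Ideal.subset_span (Set.mem_insert_of_mem _ (Set.mem_insert_of_mem _ (Set.mem_insert _ _)))
  have h := Ideal.Quotient.eq_zero_iff_mem.mpr hm
  simp only [map_sub, map_add, map_mul] at h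
  exact h

private lemma relE4 : qD * qD = 0 := by
  have hm : (X 3 * X 3 : MvPolynomial (Fin 4) ℤ) ∈ ogrIdeal :=
    Ideal.subset_span (Set.mem_insert_of_mem _ (Set.mem_insert_of_mem _ (Set.mem_insert_of_mem _ (Set.mem_singleton _))))
  have h := Ideal.Quotient.eq_zero_iff_mem.mpr hm
  rw [map_mul] at h
  exact h

private lemma mqv0 : mq 0 = 1 := map_one (Ideal.Quotient.mk ogrIdeal)

private lemma mqv1 : mq 1 = qA := rfl

private lemma mqv2 : mq 2 = qB := rfl

private lemma mqv3 : mq 3 = qC := rfl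

private lemma mqv4 : mq 4 = qD := rfl

private lemma mqv5 : mq 5 = qA * qB := by
  show Ideal.Quotient.mk ogrIdeal (X 0 * X 1) = qA * qB
  rw [map_mul]
  rfl

private lemma mqv6 : mq 6 = qA * qC := by
  show Ideal.Quotient.mk ogrIdeal (X 0 * X 2) = qA * qC
  rw [map_mul]
  rfl

private lemma mqv7 : mq 7 = qA * qD := by
  show Ideal.Quotient.mk ogrIdeal (X 0 * X 3) = qA * qD
  rw [map_mul]
  rfl

private lemma mqv8 : mq 8 = qB * qC := by
  show Ideal.Quotient.mk ogrIdeal (X 1 * X 2) = qB * qC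
  rw [map_mul]
  rfl

private lemma mqv9 : mq 9 = qB * qD := by
  show Ideal.Quotient.mk ogrIdeal (X 1 * X 3) = qB * qD
  rw [map_mul]
  rfl

private lemma mqv10 : mq 10 = qC * qD := by
  show Ideal.Quotient.mk ogrIdeal (X 2 * X 3) = qC * qD
  rw [map_mul]
  rfl

private lemma mqv11 : mq 11 = qA * qB * qC := by
  show Ideal.Quotient.mk ogrIdeal (X 0 * X 1 * X 2) = qA * qB * qC
  rw [map_mul, map_mul]
  rfl

private lemma mqv12 : mq 12 = qA * qB * qD := by
  show Ideal.Quotient.mk ogrIdeal (X 0 * X 1 * X 3) = qA * qB * qD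
  rw [map_mul, map_mul]
  rfl

private lemma mqv13 : mq 13 = qA * qC * qD := by
  show Ideal.Quotient.mk ogrIdeal (X 0 * X 2 * X 3) = qA * qC * qD
  rw [map_mul, map_mul]
  rfl

private lemma mqv14 : mq 14 = qB * qC * qD := by
  show Ideal.Quotient.mk ogrIdeal (X 1 * X 2 * X 3) = qB * qC * qD
  rw [map_mul, map_mul]
  rfl

private lemma mqv15 : mq 15 = qA * qB * qC * qD := by
  show Ideal.Quotient.mk ogrIdeal (X 0 * X 1 * X 2 * X 3) = qA * qB * qC * qD
  rw [map_mul, map_mul, map_mul]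
  rfl

private lemma sl_0_0 : mq 0 * qA ∈ Wsub := by
  have h : mq 0 * qA = (1 : ℤ) • mq 1 := by
    rw [mqv0, mqv1]
    simp only [zsmul_eq_mul]
    push_cast
    ring
  rw [h]
  exact Submodule.smul_mem _ _ (Submodule.subset_span ⟨1, rfl⟩)

private lemma sl_0_1 : mq 1 * qA ∈ Wsub := by
  have h : mq 1 * qA = (1 : ℤ) • mq 2 := by
    rw [mqv1, mqv2]
    simp only [zsmul_eq_mul]
    push_cast
    linear_combination ((-1)) * relE1
  rw [h]
  exact Submodule.smul_mem _ _ (Submodule.subset_span ⟨2, rfl⟩)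

private lemma sl_0_2 : mq 2 * qA ∈ Wsub := by
  have h : mq 2 * qA = (1 : ℤ) • mq 5 := by
    rw [mqv2, mqv5]
    simp only [zsmul_eq_mul]
    push_cast
    ring
  rw [h]
  exact Submodule.smul_mem _ _ (Submodule.subset_span ⟨5, rfl⟩)

private lemma sl_0_3 : mq 3 * qA ∈ Wsub := by
  have h : mq 3 * qA = (1 : ℤ) • mq 6 := by
    rw [mqv3, mqv6]
    simp only [zsmul_eq_mul]
    push_cast
    ring
  rw [h]
  exact Submodule.smul_mem _ _ (Submodule.subset_span ⟨6, rfl⟩)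

private lemma sl_0_4 : mq 4 * qA ∈ Wsub := by
  have h : mq 4 * qA = (1 : ℤ) • mq 7 := by
    rw [mqv4, mqv7]
    simp only [zsmul_eq_mul]
    push_cast
    ring
  rw [h]
  exact Submodule.smul_mem _ _ (Submodule.subset_span ⟨7, rfl⟩)

private lemma sl_0_5 : mq 5 * qA ∈ Wsub := by
  have h : mq 5 * qA = (-1 : ℤ) • mq 4 + (2 : ℤ) • mq 6 := by
    rw [mqv5, mqv4, mqv6]
    simp only [zsmul_eq_mul]
    push_cast
    linear_combination ((-1)*qB) * relE1 + ((1)) * relE2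
  rw [h]
  exact add_mem (Submodule.smul_mem _ _ (Submodule.subset_span ⟨4, rfl⟩))
      (Submodule.smul_mem _ _ (Submodule.subset_span ⟨6, rfl⟩))

private lemma sl_0_6 : mq 6 * qA ∈ Wsub := by
  have h : mq 6 * qA = (1 : ℤ) • mq 8 := by
    rw [mqv6, mqv8]
    simp only [zsmul_eq_mul]
    push_cast
    linear_combination ((-1)*qC) * relE1
  rw [h]
  exact Submodule.smul_mem _ _ (Submodule.subset_span ⟨8, rfl⟩)

private lemma sl_0_7 : mq 7 * qA ∈ Wsub := by
  have h : mq 7 * qA = (1 : ℤ) • mq 9 := by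
    rw [mqv7, mqv9]
    simp only [zsmul_eq_mul]
    push_cast
    linear_combination ((-1)*qD) * relE1
  rw [h]
  exact Submodule.smul_mem _ _ (Submodule.subset_span ⟨9, rfl⟩)

private lemma sl_0_8 : mq 8 * qA ∈ Wsub := by
  have h : mq 8 * qA = (1 : ℤ) • mq 11 := by
    rw [mqv8, mqv11]
    simp only [zsmul_eq_mul]
    push_cast
    ring
  rw [h]
  exact Submodule.smul_mem _ _ (Submodule.subset_span ⟨11, rfl⟩)

private lemma sl_0_9 : mq 9 * qA ∈ Wsub := by
  have h : mq 9 * qA = (1 : ℤ) • mq 12 := by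
    rw [mqv9, mqv12]
    simp only [zsmul_eq_mul]
    push_cast
    ring
  rw [h]
  exact Submodule.smul_mem _ _ (Submodule.subset_span ⟨12, rfl⟩)

private lemma sl_0_10 : mq 10 * qA ∈ Wsub := by
  have h : mq 10 * qA = (1 : ℤ) • mq 13 := by
    rw [mqv10, mqv13]
    simp only [zsmul_eq_mul]
    push_cast
    ring
  rw [h]
  exact Submodule.smul_mem _ _ (Submodule.subset_span ⟨13, rfl⟩)

private lemma sl_0_11 : mq 11 * qA ∈ Wsub := by
  have h : mq 11 * qA = (-1 : ℤ) • mq 10 + (4 : ℤ) • mq 12 := by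
    rw [mqv11, mqv10, mqv12]
    simp only [zsmul_eq_mul]
    push_cast
    linear_combination ((-1)*qB*qC) * relE1 + (qC) * relE2 + ((-2)*qA) * relE3
  rw [h]
  exact add_mem (Submodule.smul_mem _ _ (Submodule.subset_span ⟨10, rfl⟩))
      (Submodule.smul_mem _ _ (Submodule.subset_span ⟨12, rfl⟩))

private lemma sl_0_12 : mq 12 * qA ∈ Wsub := by
  have h : mq 12 * qA = (2 : ℤ) • mq 13 := by
    rw [mqv12, mqv13]
    simp only [zsmul_eq_mul]
    push_cast
    linear_combination ((-1)*qB*qD) * relE1 + (qD) * relE2 + ((-1)) * relE4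
  rw [h]
  exact Submodule.smul_mem _ _ (Submodule.subset_span ⟨13, rfl⟩)

private lemma sl_0_13 : mq 13 * qA ∈ Wsub := by
  have h : mq 13 * qA = (1 : ℤ) • mq 14 := by
    rw [mqv13, mqv14]
    simp only [zsmul_eq_mul]
    push_cast
    linear_combination ((-1)*qC*qD) * relE1
  rw [h]
  exact Submodule.smul_mem _ _ (Submodule.subset_span ⟨14, rfl⟩)

private lemma sl_0_14 : mq 14 * qA ∈ Wsub := by
  have h : mq 14 * qA = (1 : ℤ) • mq 15 := by
    rw [mqv14, mqv15]
    simp only [zsmul_eq_mul]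
    push_cast
    ring
  rw [h]
  exact Submodule.smul_mem _ _ (Submodule.subset_span ⟨15, rfl⟩)

private lemma sl_0_15 : mq 15 * qA ∈ Wsub := by
  have h : mq 15 * qA = 0 := by
    rw [mqv15]
    linear_combination ((-1)*qB*qC*qD) * relE1 + (qC*qD) * relE2 + ((-2)*qA*qD) * relE3 + ((-1)*qC + (4)*qA*qB) * relE4
  rw [h]
  exact Submodule.zero_mem _

private lemma sl_1_0 : mq 0 * qB ∈ Wsub := by
  have h : mq 0 * qB = (1 : ℤ) • mq 2 := by
    rw [mqv0, mqv2]
    simp only [zsmul_eq_mul]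
    push_cast
    ring
  rw [h]
  exact Submodule.smul_mem _ _ (Submodule.subset_span ⟨2, rfl⟩)

private lemma sl_1_1 : mq 1 * qB ∈ Wsub := by
  have h : mq 1 * qB = (1 : ℤ) • mq 5 := by
    rw [mqv1, mqv5]
    simp only [zsmul_eq_mul]
    push_cast
    ring
  rw [h]
  exact Submodule.smul_mem _ _ (Submodule.subset_span ⟨5, rfl⟩)

private lemma sl_1_2 : mq 2 * qB ∈ Wsub := by
  have h : mq 2 * qB = (-1 : ℤ) • mq 4 + (2 : ℤ) • mq 6 := by
    rw [mqv2, mqv4, mqv6]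
    simp only [zsmul_eq_mul]
    push_cast
    linear_combination ((1)) * relE2
  rw [h]
  exact add_mem (Submodule.smul_mem _ _ (Submodule.subset_span ⟨4, rfl⟩))
      (Submodule.smul_mem _ _ (Submodule.subset_span ⟨6, rfl⟩))

private lemma sl_1_3 : mq 3 * qB ∈ Wsub := by
  have h : mq 3 * qB = (1 : ℤ) • mq 8 := by
    rw [mqv3, mqv8]
    simp only [zsmul_eq_mul]
    push_cast
    ring
  rw [h]
  exact Submodule.smul_mem _ _ (Submodule.subset_span ⟨8, rfl⟩)

private lemma sl_1_4 : mq 4 * qB ∈ Wsub := by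
  have h : mq 4 * qB = (1 : ℤ) • mq 9 := by
    rw [mqv4, mqv9]
    simp only [zsmul_eq_mul]
    push_cast
    ring
  rw [h]
  exact Submodule.smul_mem _ _ (Submodule.subset_span ⟨9, rfl⟩)

private lemma sl_1_5 : mq 5 * qB ∈ Wsub := by
  have h : mq 5 * qB = (-1 : ℤ) • mq 7 + (2 : ℤ) • mq 8 := by
    rw [mqv5, mqv7, mqv8]
    simp only [zsmul_eq_mul]
    push_cast
    linear_combination ((-2)*qC) * relE1 + (qA) * relE2
  rw [h]
  exact add_mem (Submodule.smul_mem _ _ (Submodule.subset_span ⟨7, rfl⟩))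
      (Submodule.smul_mem _ _ (Submodule.subset_span ⟨8, rfl⟩))

private lemma sl_1_6 : mq 6 * qB ∈ Wsub := by
  have h : mq 6 * qB = (1 : ℤ) • mq 11 := by
    rw [mqv6, mqv11]
    simp only [zsmul_eq_mul]
    push_cast
    ring
  rw [h]
  exact Submodule.smul_mem _ _ (Submodule.subset_span ⟨11, rfl⟩)

private lemma sl_1_7 : mq 7 * qB ∈ Wsub := by
  have h : mq 7 * qB = (1 : ℤ) • mq 12 := by
    rw [mqv7, mqv12]
    simp only [zsmul_eq_mul]
    push_cast
    ring
  rw [h]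
  exact Submodule.smul_mem _ _ (Submodule.subset_span ⟨12, rfl⟩)

private lemma sl_1_8 : mq 8 * qB ∈ Wsub := by
  have h : mq 8 * qB = (-1 : ℤ) • mq 10 + (4 : ℤ) • mq 12 := by
    rw [mqv8, mqv10, mqv12]
    simp only [zsmul_eq_mul]
    push_cast
    linear_combination (qC) * relE2 + ((-2)*qA) * relE3
  rw [h]
  exact add_mem (Submodule.smul_mem _ _ (Submodule.subset_span ⟨10, rfl⟩))
      (Submodule.smul_mem _ _ (Submodule.subset_span ⟨12, rfl⟩))

private lemma sl_1_9 : mq 9 * qB ∈ Wsub := by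
  have h : mq 9 * qB = (2 : ℤ) • mq 13 := by
    rw [mqv9, mqv13]
    simp only [zsmul_eq_mul]
    push_cast
    linear_combination (qD) * relE2 + ((-1)) * relE4
  rw [h]
  exact Submodule.smul_mem _ _ (Submodule.subset_span ⟨13, rfl⟩)

private lemma sl_1_10 : mq 10 * qB ∈ Wsub := by
  have h : mq 10 * qB = (1 : ℤ) • mq 14 := by
    rw [mqv10, mqv14]
    simp only [zsmul_eq_mul]
    push_cast
    ring
  rw [h]
  exact Submodule.smul_mem _ _ (Submodule.subset_span ⟨14, rfl⟩)

private lemma sl_1_11 : mq 11 * qB ∈ Wsub := by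
  have h : mq 11 * qB = (7 : ℤ) • mq 13 := by
    rw [mqv11, mqv13]
    simp only [zsmul_eq_mul]
    push_cast
    linear_combination ((-2)*qC*qC) * relE1 + ((4)*qD + qA*qC) * relE2 + ((-2)*qB) * relE3 + ((-4)) * relE4
  rw [h]
  exact Submodule.smul_mem _ _ (Submodule.subset_span ⟨13, rfl⟩)

private lemma sl_1_12 : mq 12 * qB ∈ Wsub := by
  have h : mq 12 * qB = (2 : ℤ) • mq 14 := by
    rw [mqv12, mqv14]
    simp only [zsmul_eq_mul]
    push_cast
    linear_combination ((-2)*qC*qD) * relE1 + (qA*qD) * relE2 + ((-1)*qA) * relE4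
  rw [h]
  exact Submodule.smul_mem _ _ (Submodule.subset_span ⟨14, rfl⟩)

private lemma sl_1_13 : mq 13 * qB ∈ Wsub := by
  have h : mq 13 * qB = (1 : ℤ) • mq 15 := by
    rw [mqv13, mqv15]
    simp only [zsmul_eq_mul]
    push_cast
    ring
  rw [h]
  exact Submodule.smul_mem _ _ (Submodule.subset_span ⟨15, rfl⟩)

private lemma sl_1_14 : mq 14 * qB ∈ Wsub := by
  have h : mq 14 * qB = 0 := by
    rw [mqv14]
    linear_combination (qC*qD) * relE2 + ((-2)*qA*qD) * relE3 + ((-1)*qC + (4)*qA*qB) * relE4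
  rw [h]
  exact Submodule.zero_mem _

private lemma sl_1_15 : mq 15 * qB ∈ Wsub := by
  have h : mq 15 * qB = 0 := by
    rw [mqv15]
    linear_combination ((-2)*qC*qC*qD) * relE1 + ((4)*qD*qD + qA*qC*qD) * relE2 + ((-2)*qB*qD) * relE3 + ((-4)*qD + (7)*qA*qC) * relE4
  rw [h]
  exact Submodule.zero_mem _

private lemma sl_2_0 : mq 0 * qC ∈ Wsub := by
  have h : mq 0 * qC = (1 : ℤ) • mq 3 := by
    rw [mqv0, mqv3]
    simp only [zsmul_eq_mul]
    push_cast
    ring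
  rw [h]
  exact Submodule.smul_mem _ _ (Submodule.subset_span ⟨3, rfl⟩)

private lemma sl_2_1 : mq 1 * qC ∈ Wsub := by
  have h : mq 1 * qC = (1 : ℤ) • mq 6 := by
    rw [mqv1, mqv6]
    simp only [zsmul_eq_mul]
    push_cast
    ring
  rw [h]
  exact Submodule.smul_mem _ _ (Submodule.subset_span ⟨6, rfl⟩)

private lemma sl_2_2 : mq 2 * qC ∈ Wsub := by
  have h : mq 2 * qC = (1 : ℤ) • mq 8 := by
    rw [mqv2, mqv8]
    simp only [zsmul_eq_mul]
    push_cast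
    ring
  rw [h]
  exact Submodule.smul_mem _ _ (Submodule.subset_span ⟨8, rfl⟩)

private lemma sl_2_3 : mq 3 * qC ∈ Wsub := by
  have h : mq 3 * qC = (2 : ℤ) • mq 9 := by
    rw [mqv3, mqv9]
    simp only [zsmul_eq_mul]
    push_cast
    linear_combination ((-1)) * relE3
  rw [h]
  exact Submodule.smul_mem _ _ (Submodule.subset_span ⟨9, rfl⟩)

private lemma sl_2_4 : mq 4 * qC ∈ Wsub := by
  have h : mq 4 * qC = (1 : ℤ) • mq 10 := by
    rw [mqv4, mqv10]
    simp only [zsmul_eq_mul]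
    push_cast
    ring
  rw [h]
  exact Submodule.smul_mem _ _ (Submodule.subset_span ⟨10, rfl⟩)

private lemma sl_2_5 : mq 5 * qC ∈ Wsub := by
  have h : mq 5 * qC = (1 : ℤ) • mq 11 := by
    rw [mqv5, mqv11]
    simp only [zsmul_eq_mul]
    push_cast
    ring
  rw [h]
  exact Submodule.smul_mem _ _ (Submodule.subset_span ⟨11, rfl⟩)

private lemma sl_2_6 : mq 6 * qC ∈ Wsub := by
  have h : mq 6 * qC = (2 : ℤ) • mq 12 := by
    rw [mqv6, mqv12]
    simp only [zsmul_eq_mul]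
    push_cast
    linear_combination ((-1)*qA) * relE3
  rw [h]
  exact Submodule.smul_mem _ _ (Submodule.subset_span ⟨12, rfl⟩)

private lemma sl_2_7 : mq 7 * qC ∈ Wsub := by
  have h : mq 7 * qC = (1 : ℤ) • mq 13 := by
    rw [mqv7, mqv13]
    simp only [zsmul_eq_mul]
    push_cast
    ring
  rw [h]
  exact Submodule.smul_mem _ _ (Submodule.subset_span ⟨13, rfl⟩)

private lemma sl_2_8 : mq 8 * qC ∈ Wsub := by
  have h : mq 8 * qC = (4 : ℤ) • mq 13 := by
    rw [mqv8, mqv13]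
    simp only [zsmul_eq_mul]
    push_cast
    linear_combination ((2)*qD) * relE2 + ((-1)*qB) * relE3 + ((-2)) * relE4
  rw [h]
  exact Submodule.smul_mem _ _ (Submodule.subset_span ⟨13, rfl⟩)

private lemma sl_2_9 : mq 9 * qC ∈ Wsub := by
  have h : mq 9 * qC = (1 : ℤ) • mq 14 := by
    rw [mqv9, mqv14]
    simp only [zsmul_eq_mul]
    push_cast
    ring
  rw [h]
  exact Submodule.smul_mem _ _ (Submodule.subset_span ⟨14, rfl⟩)

private lemma sl_2_10 : mq 10 * qC ∈ Wsub := by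
  have h : mq 10 * qC = 0 := by
    rw [mqv10]
    linear_combination ((-1)*qD) * relE3 + ((2)*qB) * relE4
  rw [h]
  exact Submodule.zero_mem _

private lemma sl_2_11 : mq 11 * qC ∈ Wsub := by
  have h : mq 11 * qC = (4 : ℤ) • mq 14 := by
    rw [mqv11, mqv14]
    simp only [zsmul_eq_mul]
    push_cast
    linear_combination ((-4)*qC*qD) * relE1 + ((2)*qA*qD) * relE2 + ((-1)*qA*qB) * relE3 + ((-2)*qA) * relE4
  rw [h]
  exact Submodule.smul_mem _ _ (Submodule.subset_span ⟨14, rfl⟩)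

private lemma sl_2_12 : mq 12 * qC ∈ Wsub := by
  have h : mq 12 * qC = (1 : ℤ) • mq 15 := by
    rw [mqv12, mqv15]
    simp only [zsmul_eq_mul]
    push_cast
    ring
  rw [h]
  exact Submodule.smul_mem _ _ (Submodule.subset_span ⟨15, rfl⟩)

private lemma sl_2_13 : mq 13 * qC ∈ Wsub := by
  have h : mq 13 * qC = 0 := by
    rw [mqv13]
    linear_combination ((-1)*qA*qD) * relE3 + ((2)*qA*qB) * relE4
  rw [h]
  exact Submodule.zero_mem _

private lemma sl_2_14 : mq 14 * qC ∈ Wsub := by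
  have h : mq 14 * qC = 0 := by
    rw [mqv14]
    linear_combination ((2)*qD*qD) * relE2 + ((-1)*qB*qD) * relE3 + ((-2)*qD + (4)*qA*qC) * relE4
  rw [h]
  exact Submodule.zero_mem _

private lemma sl_2_15 : mq 15 * qC ∈ Wsub := by
  have h : mq 15 * qC = 0 := by
    rw [mqv15]
    linear_combination ((-4)*qC*qD*qD) * relE1 + ((2)*qA*qD*qD) * relE2 + ((-1)*qA*qB*qD) * relE3 + ((4)*qB*qC + (-2)*qA*qD) * relE4
  rw [h]
  exact Submodule.zero_mem _

private lemma sl_3_0 : mq 0 * qD ∈ Wsub := by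
  have h : mq 0 * qD = (1 : ℤ) • mq 4 := by
    rw [mqv0, mqv4]
    simp only [zsmul_eq_mul]
    push_cast
    ring
  rw [h]
  exact Submodule.smul_mem _ _ (Submodule.subset_span ⟨4, rfl⟩)

private lemma sl_3_1 : mq 1 * qD ∈ Wsub := by
  have h : mq 1 * qD = (1 : ℤ) • mq 7 := by
    rw [mqv1, mqv7]
    simp only [zsmul_eq_mul]
    push_cast
    ring
  rw [h]
  exact Submodule.smul_mem _ _ (Submodule.subset_span ⟨7, rfl⟩)

private lemma sl_3_2 : mq 2 * qD ∈ Wsub := by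
  have h : mq 2 * qD = (1 : ℤ) • mq 9 := by
    rw [mqv2, mqv9]
    simp only [zsmul_eq_mul]
    push_cast
    ring
  rw [h]
  exact Submodule.smul_mem _ _ (Submodule.subset_span ⟨9, rfl⟩)

private lemma sl_3_3 : mq 3 * qD ∈ Wsub := by
  have h : mq 3 * qD = (1 : ℤ) • mq 10 := by
    rw [mqv3, mqv10]
    simp only [zsmul_eq_mul]
    push_cast
    ring
  rw [h]
  exact Submodule.smul_mem _ _ (Submodule.subset_span ⟨10, rfl⟩)

private lemma sl_3_4 : mq 4 * qD ∈ Wsub := by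
  have h : mq 4 * qD = 0 := by
    rw [mqv4]
    linear_combination ((1)) * relE4
  rw [h]
  exact Submodule.zero_mem _

private lemma sl_3_5 : mq 5 * qD ∈ Wsub := by
  have h : mq 5 * qD = (1 : ℤ) • mq 12 := by
    rw [mqv5, mqv12]
    simp only [zsmul_eq_mul]
    push_cast
    ring
  rw [h]
  exact Submodule.smul_mem _ _ (Submodule.subset_span ⟨12, rfl⟩)

private lemma sl_3_6 : mq 6 * qD ∈ Wsub := by
  have h : mq 6 * qD = (1 : ℤ) • mq 13 := by
    rw [mqv6, mqv13]
    simp only [zsmul_eq_mul]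
    push_cast
    ring
  rw [h]
  exact Submodule.smul_mem _ _ (Submodule.subset_span ⟨13, rfl⟩)

private lemma sl_3_7 : mq 7 * qD ∈ Wsub := by
  have h : mq 7 * qD = 0 := by
    rw [mqv7]
    linear_combination (qA) * relE4
  rw [h]
  exact Submodule.zero_mem _

private lemma sl_3_8 : mq 8 * qD ∈ Wsub := by
  have h : mq 8 * qD = (1 : ℤ) • mq 14 := by
    rw [mqv8, mqv14]
    simp only [zsmul_eq_mul]
    push_cast
    ring
  rw [h]
  exact Submodule.smul_mem _ _ (Submodule.subset_span ⟨14, rfl⟩)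

private lemma sl_3_9 : mq 9 * qD ∈ Wsub := by
  have h : mq 9 * qD = 0 := by
    rw [mqv9]
    linear_combination (qB) * relE4
  rw [h]
  exact Submodule.zero_mem _

private lemma sl_3_10 : mq 10 * qD ∈ Wsub := by
  have h : mq 10 * qD = 0 := by
    rw [mqv10]
    linear_combination (qC) * relE4
  rw [h]
  exact Submodule.zero_mem _

private lemma sl_3_11 : mq 11 * qD ∈ Wsub := by
  have h : mq 11 * qD = (1 : ℤ) • mq 15 := by
    rw [mqv11, mqv15]
    simp only [zsmul_eq_mul]
    push_cast
    ring
  rw [h]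
  exact Submodule.smul_mem _ _ (Submodule.subset_span ⟨15, rfl⟩)

private lemma sl_3_12 : mq 12 * qD ∈ Wsub := by
  have h : mq 12 * qD = 0 := by
    rw [mqv12]
    linear_combination (qA*qB) * relE4
  rw [h]
  exact Submodule.zero_mem _

private lemma sl_3_13 : mq 13 * qD ∈ Wsub := by
  have h : mq 13 * qD = 0 := by
    rw [mqv13]
    linear_combination (qA*qC) * relE4
  rw [h]
  exact Submodule.zero_mem _

private lemma sl_3_14 : mq 14 * qD ∈ Wsub := by
  have h : mq 14 * qD = 0 := by
    rw [mqv14]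
    linear_combination (qB*qC) * relE4
  rw [h]
  exact Submodule.zero_mem _

private lemma sl_3_15 : mq 15 * qD ∈ Wsub := by
  have h : mq 15 * qD = 0 := by
    rw [mqv15]
    linear_combination (qA*qB*qC) * relE4
  rw [h]
  exact Submodule.zero_mem _

private lemma sbase (i : Fin 4) (j : Fin 16) :
    mq j * Ideal.Quotient.mk ogrIdeal (X i) ∈ Wsub := by
  fin_cases i <;> fin_cases j
  exacts [sl_0_0, sl_0_1, sl_0_2, sl_0_3, sl_0_4, sl_0_5, sl_0_6, sl_0_7, sl_0_8, sl_0_9, sl_0_10, sl_0_11, sl_0_12, sl_0_13, sl_0_14, sl_0_15, sl_1_0, sl_1_1, sl_1_2, sl_1_3, sl_1_4, sl_1_5, sl_1_6, sl_1_7, sl_1_8, sl_1_9, sl_1_10, sl_1_11, sl_1_12, sl_1_13, sl_1_14, sl_1_15, sl_2_0, sl_2_1, sl_2_2, sl_2_3, sl_2_4, sl_2_5, sl_2_6, sl_2_7, sl_2_8, sl_2_9, sl_2_10, sl_2_11, sl_2_12, sl_2_13, sl_2_14, sl_2_15, sl_3_0, sl_3_1, sl_3_2, sl_3_3, sl_3_4,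 sl_3_5, sl_3_6, sl_3_7, sl_3_8, sl_3_9, sl_3_10, sl_3_11, sl_3_12, sl_3_13, sl_3_14, sl_3_15]

private lemma mulX (i : Fin 4) (w : MvPolynomial (Fin 4) ℤ ⧸ ogrIdeal) (hw : w ∈ Wsub) :
    w * Ideal.Quotient.mk ogrIdeal (X i) ∈ Wsub := by
  refine Submodule.span_induction
    (p := fun x _ => x * Ideal.Quotient.mk ogrIdeal (X i) ∈ Wsub) ?_ ?_ ?_ ?_ hw
  · rintro x ⟨j, rfl⟩
    exact sbase i j
  · show (0 : MvPolynomial (Fin 4) ℤ ⧸ ogrIdeal) * Ideal.Quotient.mk ogrIdeal (X i) ∈ Wsub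
    rw [zero_mul]; exact Submodule.zero_mem _
  · intro x y hx hy h1 h2
    show (x + y) * Ideal.Quotient.mk ogrIdeal (X i) ∈ Wsub
    rw [add_mul]; exact add_mem h1 h2
  · intro a x hx h1
    show (a • x) * Ideal.Quotient.mk ogrIdeal (X i) ∈ Wsub
    rw [smul_mul_assoc]; exact Submodule.smul_mem _ a h1

private lemma span_top (x : MvPolynomial (Fin 4) ℤ ⧸ ogrIdeal) : x ∈ Wsub := by
  obtain ⟨p, rfl⟩ := Ideal.Quotient.mk_surjective x
  induction p using MvPolynomial.induction_on with
  | C a =>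
      have h : Ideal.Quotient.mk ogrIdeal (C a)
          = a • (1 : MvPolynomial (Fin 4) ℤ ⧸ ogrIdeal) := by
        rw [show (C a : MvPolynomial (Fin 4) ℤ) = ((a : ℤ) : MvPolynomial (Fin 4) ℤ) from
              eq_intCast MvPolynomial.C a,
            map_intCast, zsmul_eq_mul, mul_one]
      rw [h]
      exact Submodule.smul_mem _ a (Submodule.subset_span ⟨0, map_one _⟩)
  | add p q hp hq => rw [map_add]; exact add_mem hp hq
  | mul_X p n hp => rw [map_mul]; exact mulX n _ hp

/-- In `R = ℤ[e₁,e₂,e₃,e₄]/(relations)` the sixteen square-free monomials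
`e_{i₁} ⋯ e_{i_r}`, `1 ≤ i₁ < ⋯ < i_r ≤ 4` (including `1`), form a `ℤ`-basis. -/
theorem stmt_13 :
    ∃ b : Module.Basis (Fin 16) ℤ (MvPolynomial (Fin 4) ℤ ⧸ ogrIdeal),
      ∀ i : Fin 16, b i = Ideal.Quotient.mk ogrIdeal
        (![1, X 0, X 1, X 2, X 3,
           X 0 * X 1, X 0 * X 2, X 0 * X 3, X 1 * X 2, X 1 * X 3, X 2 * X 3,
           X 0 * X 1 * X 2, X 0 * X 1 * X 3, X 0 * X 2 * X 3, X 1 * X 2 * X 3,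
           X 0 * X 1 * X 2 * X 3] i) := by
  refine ⟨Module.Basis.mk ogr_li (fun x _ => span_top x), fun i => ?_⟩
  refine (Module.Basis.mk_apply ogr_li _ i).trans ?_
  rfl
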